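/- If a class of total recursive functions has a canonical enumeration computable in the limit, then its complexity bound enumeration is computable in the limit: the enumeration of all indices i for which there is an index j in the canonical enumeration with φ_i(x) = φ_j(x) for all x and Φ_i(x) ≤ Φ_j(x) for all x. -/

import Mathlib

open Nat.Partrec (Code)

/-- `φ i` is the partial recursive function with index `i`. -/
def φ (i : ℕ) : ℕ →. ℕ := (Denumerable.ofNat Code i).eval

/-- `LConv ψ x v`: the guessing function `ψ` on input `x` l-converges in the limit to `v`:
there is a `u` with `ψ x u = v` and for all `t > u`, `ψ x t = v` whenever it converges. -/
def LConv (ψ : ℕ → ℕ →. ℕ) (x v : ℕ) : Prop :=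
  ∃ u, v ∈ ψ x u ∧ ∀ t, u < t → ∀ w ∈ ψ x t, w = v

/-- TM_i is pointwise at least as fast as TM_j: whenever TM_j halts within k steps,
so does TM_i. -/
def Faster (i j : ℕ) : Prop :=
  ∀ x k, (Nat.Partrec.Code.evaln k (Denumerable.ofNat Code j) x).isSome →
    (Nat.Partrec.Code.evaln k (Denumerable.ofNat Code i) x).isSome

namespace Stmt11Aux

open Nat.Partrec.Code

def ballB (p : ℕ → Bool) (t : ℕ) : Bool := (List.range (t+1)).foldr (fun x b => p x && b) true

lemma foldr_and_eq_true {p : ℕ → Bool} : ∀ l : List ℕ,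
    (l.foldr (fun x b => p x && b) true = true ↔ ∀ x ∈ l, p x = true)
  | [] => by simp
  | a :: l => by simp [foldr_and_eq_true l]

lemma ballB_eq_true {p : ℕ → Bool} {t : ℕ} : ballB p t = true ↔ ∀ x ≤ t, p x = true := by
  rw [ballB, foldr_and_eq_true]; simp [Nat.lt_succ_iff]

lemma ballB_primrec {α} [Primcodable α] {p : α → ℕ → Bool} {f : α → ℕ}
    (hp : Primrec₂ p) (hf : Primrec f) : Primrec fun a => ballB (p a) (f a) := by
  have := Primrec.list_foldr (f := fun a => List.range (f a + 1)) (g := fun _ : α => true)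
    (h := fun a q => p a q.1 && q.2)
    (Primrec.list_range.comp (Primrec.succ.comp hf)) (Primrec.const true)
    (Primrec₂.comp₂ Primrec.and (hp.comp₂ (Primrec₂.left) (Primrec.fst.comp₂ Primrec₂.right))
      (Primrec.snd.comp₂ Primrec₂.right))
  exact this.of_eq fun a => rfl

def papprox (c : Code) (m t : ℕ) : ℕ :=
  (evaln t c (Nat.pair m (Nat.findGreatest (fun u => (evaln t c (Nat.pair m u)).isSome) t))).getD 0

lemma papprox_primrec (c : Code) : Primrec₂ (papprox c) := by
  have he : Primrec fun q : (ℕ × ℕ) × ℕ => evaln q.1.2 c (Nat.pair q.1.1 q.2) :=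
    primrec_evaln.comp (((Primrec.snd.comp .fst).pair (Primrec.const c)).pair
      (Primrec₂.natPair.comp (Primrec.fst.comp .fst) Primrec.snd))
  have hU : Primrec fun a : ℕ × ℕ =>
      Nat.findGreatest (fun u => (evaln a.2 c (Nat.pair a.1 u)).isSome) a.2 := by
    have hrel : PrimrecRel fun (a : ℕ × ℕ) (u : ℕ) => ((evaln a.2 c (Nat.pair a.1 u)).isSome : Prop) := by
      have : Primrec₂ fun (a : ℕ × ℕ) (u : ℕ) => (evaln a.2 c (Nat.pair a.1 u)).isSome :=
        (Primrec.option_isSome.comp he).to₂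
      exact Primrec₂.primrecRel (this.of_eq fun a u => by simp)
    exact Primrec.nat_findGreatest Primrec.snd hrel
  have : Primrec fun a : ℕ × ℕ =>
      (evaln a.2 c (Nat.pair a.1 (Nat.findGreatest (fun u => (evaln a.2 c (Nat.pair a.1 u)).isSome) a.2))).getD 0 :=
    Primrec.option_getD.comp (he.comp (Primrec.id.pair hU)) (Primrec.const 0)
  exact this.to₂

def checkB (c : Code) (i m t : ℕ) : Bool :=
  ballB (fun x => ballB (fun k =>
    !(evaln k (Denumerable.ofNat Code (papprox c m t)) x).isSome ||
      decide (evaln k (Denumerable.ofNat Code i) x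
        = evaln k (Denumerable.ofNat Code (papprox c m t)) x)) t) t

lemma checkB_primrec (c : Code) : Primrec fun q : (ℕ × ℕ) × ℕ => checkB c q.1.1 q.1.2 q.2 := by
  -- a = ((i,m),t) ; inner b = (a, x), innermost argument k
  have hev : Primrec fun r : (((ℕ × ℕ) × ℕ) × ℕ) × ℕ =>
      evaln r.2 (Denumerable.ofNat Code (papprox c r.1.1.1.2 r.1.1.2)) r.1.2 :=
    primrec_evaln.comp ((Primrec.snd.pair ((Primrec.ofNat Code).comp
      ((papprox_primrec c).comp (Primrec.snd.comp (Primrec.fst.comp (Primrec.fst.comp .fst)))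
        (Primrec.snd.comp (Primrec.fst.comp .fst))))).pair (Primrec.snd.comp .fst))
  have hev2 : Primrec fun r : (((ℕ × ℕ) × ℕ) × ℕ) × ℕ =>
      evaln r.2 (Denumerable.ofNat Code r.1.1.1.1) r.1.2 :=
    primrec_evaln.comp ((Primrec.snd.pair ((Primrec.ofNat Code).comp
      (Primrec.fst.comp (Primrec.fst.comp (Primrec.fst.comp .fst))))).pair (Primrec.snd.comp .fst))
  have hinner : Primrec₂ fun (b : ((ℕ × ℕ) × ℕ) × ℕ) (k : ℕ) =>
      (!(evaln k (Denumerable.ofNat Code (papprox c b.1.1.2 b.1.2)) b.2).isSome ||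
        decide (evaln k (Denumerable.ofNat Code b.1.1.1) b.2
          = evaln k (Denumerable.ofNat Code (papprox c b.1.1.2 b.1.2)) b.2)) :=
    (Primrec.or.comp ((Primrec.dom_bool Bool.not).comp (Primrec.option_isSome.comp hev))
      (Primrec.eq.comp hev2 hev).decide).to₂
  have hmid : Primrec₂ fun (a : (ℕ × ℕ) × ℕ) (x : ℕ) =>
      ballB (fun k => !(evaln k (Denumerable.ofNat Code (papprox c a.1.2 a.2)) x).isSome ||
        decide (evaln k (Denumerable.ofNat Code a.1.1) x
          = evaln k (Denumerable.ofNat Code (papprox c a.1.2 a.2)) x)) a.2 :=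
    (ballB_primrec hinner (Primrec.snd.comp .fst)).to₂
  exact (ballB_primrec hmid Primrec.snd).of_eq fun a => rfl

def guess (c : Code) (n t : ℕ) : ℕ :=
  cond (checkB c n.unpair.1 n.unpair.2 t) n.unpair.1 (papprox c 0 t)

lemma guess_primrec (c : Code) : Primrec₂ (guess c) := by
  have hu1 : Primrec fun q : ℕ × ℕ => q.1.unpair.1 :=
    Primrec.fst.comp (Primrec.unpair.comp .fst)
  have hu2 : Primrec fun q : ℕ × ℕ => q.1.unpair.2 :=
    Primrec.snd.comp (Primrec.unpair.comp .fst)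
  exact (Primrec.cond ((checkB_primrec c).comp ((hu1.pair hu2).pair Primrec.snd))
    hu1 ((papprox_primrec c).comp (Primrec.const 0) Primrec.snd)).to₂

def RelC (i j : ℕ) : Prop :=
  ∀ x k v, evaln k (Denumerable.ofNat Code j) x = some v →
    evaln k (Denumerable.ofNat Code i) x = some v

end Stmt11Aux

open Stmt11Aux Nat.Partrec.Code

set_option linter.unusedVariables false in
theorem stmt11 (P : ℕ → ℕ) (ψ : ℕ → ℕ →. ℕ) (hψ : Partrec₂ ψ)
    (hlim : ∀ n, LConv ψ n (P n))
    (htot : ∀ n x, ((φ (P n)) x).Dom)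
    (hcanon : ∀ m n, m ≠ n → ∃ z, φ (P m) z ≠ φ (P n) z) :
    ∃ (E : ℕ → ℕ) (ψ' : ℕ → ℕ →. ℕ), Partrec₂ ψ' ∧
      (∀ n, LConv ψ' n (E n)) ∧
      (∀ n, ∃ m, (∀ x, φ (E n) x = φ (P m) x) ∧ Faster (E n) (P m)) ∧
      (∀ i, (∃ m, (∀ x, φ i x = φ (P m) x) ∧ Faster i (P m)) → ∃ n, E n = i) := by
  classical
  -- get a code for ψ
  obtain ⟨c, hc⟩ : ∃ c : Code, ∀ m u, eval c (Nat.pair m u) = ψ m u := by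
    have h1 : Partrec fun n : ℕ => ψ n.unpair.1 n.unpair.2 :=
      hψ.comp (Computable.fst.comp Computable.unpair) (Computable.snd.comp Computable.unpair)
    obtain ⟨c, hc⟩ := exists_code.1 (Partrec.nat_iff.1 h1)
    exact ⟨c, fun m u => by rw [hc]; simp⟩
  -- papprox stabilizes to P m
  have lemA : ∀ m, ∃ T, ∀ t, T ≤ t → papprox c m t = P m := by
    intro m
    obtain ⟨u₀, h1, h2⟩ := hlim m
    have h1' : P m ∈ eval c (Nat.pair m u₀) := by rw [hc]; exact h1
    obtain ⟨s₀, hs₀⟩ := evaln_complete.1 h1'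
    refine ⟨max u₀ s₀, fun t ht => ?_⟩
    have hu₀t : u₀ ≤ t := le_trans (le_max_left _ _) ht
    have hQu₀ : (evaln t c (Nat.pair m u₀)).isSome = true := by
      have := evaln_mono (le_trans (le_max_right _ _) ht) hs₀
      simp [Option.isSome_iff_exists]
      exact ⟨_, this⟩
    have hU₀ : u₀ ≤ Nat.findGreatest (fun u => (evaln t c (Nat.pair m u)).isSome = true) t :=
      Nat.le_findGreatest hu₀t hQu₀
    have hQU : (evaln t c (Nat.pair m
        (Nat.findGreatest (fun u => (evaln t c (Nat.pair m u)).isSome = true) t))).isSome = true :=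
      Nat.findGreatest_spec (P := fun u => (evaln t c (Nat.pair m u)).isSome = true) hu₀t hQu₀
    obtain ⟨v, hv⟩ := Option.isSome_iff_exists.1 hQU
    have hvmem : v ∈ ψ m (Nat.findGreatest (fun u => (evaln t c (Nat.pair m u)).isSome = true) t) := by
      rw [← hc]; exact evaln_sound (c := c) (by rw [hv]; rfl)
    have hvP : v = P m := by
      rcases eq_or_lt_of_le hU₀ with h | h
      · exact Part.mem_unique (h ▸ hvmem) h1
      · exact h2 _ h v hvmem
    have hpap : papprox c m t = v := by
      rw [papprox, hv]; rfl
    rw [hpap, hvP]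
  -- RelC characterizes membership
  have relOf : ∀ i m, (∀ x, φ i x = φ (P m) x) → Faster i (P m) → RelC i (P m) := by
    intro i m hφeq hF x k v hv
    have hS : (evaln k (Denumerable.ofNat Code i) x).isSome := hF x k (by rw [hv]; rfl)
    obtain ⟨w, hw⟩ := Option.isSome_iff_exists.1 hS
    have hwmem : w ∈ φ i x := evaln_sound (by rw [hw]; rfl)
    have hvmem : v ∈ φ (P m) x := evaln_sound (by rw [hv]; rfl)
    rw [hφeq] at hwmem
    rw [hw, Part.mem_unique hwmem hvmem]
  have ofRel : ∀ i m, RelC i (P m) →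
      (∀ x, φ i x = φ (P m) x) ∧ Faster i (P m) := by
    intro i m hR
    constructor
    · intro x
      obtain ⟨v, hv⟩ := Part.dom_iff_mem.1 (htot m x)
      obtain ⟨k, hk⟩ := evaln_complete.1 hv
      have hk' : evaln k (Denumerable.ofNat Code (P m)) x = some v := hk
      have h := hR x k v hk'
      have hvi : v ∈ φ i x := evaln_sound (c := Denumerable.ofNat Code i) (by rw [h]; rfl)
      rw [Part.eq_some_iff.2 hvi, Part.eq_some_iff.2 hv]
    · intro x k hS
      obtain ⟨v, hv⟩ := Option.isSome_iff_exists.1 hS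
      rw [hR x k v hv]; rfl
  -- checkB stabilizes
  have lemB : ∀ i m, ∃ T, ∀ t, T ≤ t → (checkB c i m t = true ↔ RelC i (P m)) := by
    intro i m
    obtain ⟨T₁, hT₁⟩ := lemA m
    by_cases hR : RelC i (P m)
    · refine ⟨T₁, fun t ht => ?_⟩
      simp only [hR, iff_true]
      rw [checkB, ballB_eq_true]
      intro x hx
      rw [ballB_eq_true]
      intro k hk
      rw [hT₁ t ht]
      rcases hev : evaln k (Denumerable.ofNat Code (P m)) x with _ | v
      · simp [hev]
      · simp [hev, hR x k v hev]
    · have hR' : ∃ x k v, evaln k (Denumerable.ofNat Code (P m)) x = some v ∧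
          evaln k (Denumerable.ofNat Code i) x ≠ some v := by
        by_contra hcon
        push_neg at hcon
        exact hR fun x k v hv => hcon x k v hv
      obtain ⟨x, k, v, hv, hne⟩ := hR'
      refine ⟨max T₁ (max x k), fun t ht => ?_⟩
      have hT₁t : T₁ ≤ t := le_trans (le_max_left _ _) ht
      have hxt : x ≤ t := le_trans (le_trans (le_max_left _ _) (le_max_right _ _)) ht
      have hkt : k ≤ t := le_trans (le_trans (le_max_right _ _) (le_max_right _ _)) ht
      have hfalse : ¬ checkB c i m t = true := by
        rw [checkB, ballB_eq_true]
        intro hall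
        have h1 := hall x hxt
        rw [ballB_eq_true] at h1
        have h2 := h1 k hkt
        rw [hT₁ t hT₁t] at h2
        simp [hv] at h2
        exact hne h2
      exact iff_of_false hfalse hR
  -- the enumeration and its guessing function
  refine ⟨fun n => if RelC n.unpair.1 (P n.unpair.2) then n.unpair.1 else P 0,
    fun n t => Part.some (guess c n t), ?_, ?_, ?_, ?_⟩
  · exact (guess_primrec c).to_comp
  · intro n
    obtain ⟨T, hT⟩ := lemB n.unpair.1 n.unpair.2
    obtain ⟨T₀, hT₀⟩ := lemA 0
    have key : ∀ t, max T T₀ ≤ t → guess c n t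
        = (if RelC n.unpair.1 (P n.unpair.2) then n.unpair.1 else P 0) := by
      intro t ht
      have h1 : T ≤ t := le_trans (le_max_left _ _) ht
      have h2 : T₀ ≤ t := le_trans (le_max_right _ _) ht
      by_cases hR : RelC n.unpair.1 (P n.unpair.2)
      · rw [if_pos hR, guess, (hT _ h1).2 hR]
        rfl
      · rw [if_neg hR, guess]
        have hcf : checkB c n.unpair.1 n.unpair.2 t = false := by
          rw [← Bool.not_eq_true]
          intro hcontra
          exact hR ((hT _ h1).1 hcontra)
        rw [hcf, hT₀ _ h2]
        rfl
    refine ⟨max T T₀, ?_, ?_⟩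
    · rw [Part.mem_some_iff]
      exact (key _ (le_refl _)).symm
    · intro t htlt w hw
      rw [Part.mem_some_iff] at hw
      subst hw
      exact key _ (le_of_lt htlt)
  · intro n
    dsimp only
    by_cases hR : RelC n.unpair.1 (P n.unpair.2)
    · rw [if_pos hR]
      exact ⟨n.unpair.2, ofRel _ _ hR⟩
    · rw [if_neg hR]
      exact ⟨0, fun _ => rfl, fun _ _ h => h⟩
  · rintro i ⟨m, hφeq, hF⟩
    refine ⟨Nat.pair i m, ?_⟩
    have hR : RelC i (P m) := relOf i m hφeq hF
    simp only [Nat.unpair_pair]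
    exact if_pos hR
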